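/- Let m ≥ 5 be odd with k = (m-1)/2, and let γ₋₁ be the inverse of γ₁ = (0,1,…,m-2)(m-1) ∈ S_m. Then the permutation (m-1, k+1)·γ₋₁ (transposition first, then γ₋₁; composition left-to-right) is a single m-cycle, explicitly (0, m-2, m-3, …, k+1, m-1, k, k-1, …, 1). -/

import Mathlib

set_option maxHeartbeats 1600000

/-- Let `m = 2k+1 ≥ 5` be odd (so `k = (m-1)/2`) and `γ₋₁` the inverse
of `γ₁ = (0,1,…,m-2)(m-1)`.  The permutation `(m-1, k+1)·γ₋₁` (transposition
first, then `γ₋₁`; left-to-right) is a single `m`-cycle, explicitly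
`(0, m-2, m-3, …, k+1, m-1, k, k-1, …, 1)`. -/
theorem swap_gamma_inv_single_cycle (m k : ℕ) (hm : 5 ≤ m) (hodd : Odd m)
    (hk : m = 2 * k + 1)
    (γ : Equiv.Perm (Fin m))
    (hγ : ∀ x : Fin m, (γ x).val = if x.val = m - 1 then m - 1 else (x.val + 1) % (m - 1))
    (τ : Equiv.Perm (Fin m))
    (hτ : τ = (Equiv.swap (⟨m - 1, by omega⟩ : Fin m) ⟨k + 1, by omega⟩).trans γ⁻¹) :
    τ ⟨0, by omega⟩ = ⟨m - 2, by omega⟩ ∧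
    τ ⟨k + 1, by omega⟩ = ⟨m - 1, by omega⟩ ∧
    τ ⟨m - 1, by omega⟩ = ⟨k, by omega⟩ ∧
    (∀ (a : Fin m) (h0 : a.val ≠ 0) (h1 : a.val ≠ k + 1) (h2 : a.val ≠ m - 1),
      τ a = ⟨a.val - 1, by omega⟩) ∧
    τ.IsCycle ∧ τ.support = Finset.univ := by
  have hk2 : 2 ≤ k := by omega
  have pa : m - 1 < m := by omega
  have pb : k + 1 < m := by omega
  have p0 : 0 < m := by omega
  have pm2 : m - 2 < m := by omega
  have pk : k < m := by omega
  -- pointwise form of τ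
  have hτap : ∀ x : Fin m,
      τ x = γ⁻¹ ((Equiv.swap (⟨m - 1, pa⟩ : Fin m) ⟨k + 1, pb⟩) x) := by
    intro x; rw [hτ]; rfl
  -- swap values
  have hs_left : (Equiv.swap (⟨m - 1, pa⟩ : Fin m) ⟨k + 1, pb⟩) ⟨m - 1, pa⟩
      = ⟨k + 1, pb⟩ := Equiv.swap_apply_left _ _
  have hs_right : (Equiv.swap (⟨m - 1, pa⟩ : Fin m) ⟨k + 1, pb⟩) ⟨k + 1, pb⟩
      = ⟨m - 1, pa⟩ := Equiv.swap_apply_right _ _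
  have hs_other : ∀ x : Fin m, x.val ≠ m - 1 → x.val ≠ k + 1 →
      (Equiv.swap (⟨m - 1, pa⟩ : Fin m) ⟨k + 1, pb⟩) x = x := fun x h1 h2 =>
    Equiv.swap_apply_of_ne_of_ne (Fin.ne_of_val_ne h1) (Fin.ne_of_val_ne h2)
  -- computing γ⁻¹
  have hginv : ∀ (x z : Fin m), γ z = x → γ⁻¹ x = z := by
    intro x z h; rw [← h, Equiv.Perm.inv_def, Equiv.symm_apply_apply]
  have hγ' : ∀ (a b : ℕ) (ha : a < m) (hb : b < m),
      (if a = m - 1 then m - 1 else (a + 1) % (m - 1)) = b →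
      γ ⟨a, ha⟩ = ⟨b, hb⟩ := by
    intro a b ha hb h
    apply Fin.ext; rw [hγ]; simpa using h
  have hi0 : γ⁻¹ ⟨0, p0⟩ = ⟨m - 2, pm2⟩ := by
    apply hginv
    apply hγ' (m - 2) 0 pm2 p0
    rw [if_neg (by omega)]
    have h1 : m - 2 + 1 = m - 1 := by omega
    rw [h1, Nat.mod_self]
  have him1 : γ⁻¹ ⟨m - 1, pa⟩ = ⟨m - 1, pa⟩ := by
    apply hginv
    apply hγ' (m - 1) (m - 1) pa pa
    rw [if_pos rfl]
  have hik1 : γ⁻¹ ⟨k + 1, pb⟩ = ⟨k, pk⟩ := by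
    apply hginv
    apply hγ' k (k + 1) pk pb
    rw [if_neg (by omega), Nat.mod_eq_of_lt (by omega)]
  have higen : ∀ x : Fin m, x.val ≠ 0 → x.val ≠ m - 1 →
      γ⁻¹ x = ⟨x.val - 1, by omega⟩ := by
    intro x h0 h1
    apply hginv
    apply Fin.ext
    rw [hγ]
    simp only
    rw [if_neg (by omega)]
    have h2 : x.val - 1 + 1 = x.val := by omega
    rw [h2, Nat.mod_eq_of_lt (by omega)]
  -- the four pointwise facts
  have hτ0 : τ ⟨0, p0⟩ = ⟨m - 2, pm2⟩ :=
    (hτap _).trans ((congrArg (fun z => γ⁻¹ z)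
      (hs_other ⟨0, p0⟩ (show (0:ℕ) ≠ m - 1 by omega)
        (show (0:ℕ) ≠ k + 1 by omega))).trans hi0)
  have hτk1 : τ ⟨k + 1, pb⟩ = ⟨m - 1, pa⟩ :=
    (hτap _).trans ((congrArg (fun z => γ⁻¹ z) hs_right).trans him1)
  have hτm1 : τ ⟨m - 1, pa⟩ = ⟨k, pk⟩ :=
    (hτap _).trans ((congrArg (fun z => γ⁻¹ z) hs_left).trans hik1)
  have hτgen : ∀ (a : Fin m), a.val ≠ 0 → a.val ≠ k + 1 → a.val ≠ m - 1 →
      τ a = ⟨a.val - 1, by omega⟩ := fun a h0 h1 h2 =>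
    (hτap a).trans ((congrArg (fun z => γ⁻¹ z) (hs_other a h2 h1)).trans (higen a h0 h2))
  -- orbit function
  set g : ℕ → ℕ := fun j => if j = 0 then 0 else if j < k then m - 1 - j
      else if j = k then m - 1 else m - j with hg
  have hglt : ∀ j, j ≤ 2 * k → g j < m := by
    intro j hj; simp only [hg]; split_ifs <;> first | exact (False.elim ‹False›) | omega
  have hkey : ∀ j (hj : j ≤ 2 * k), (τ ^ j) ⟨0, p0⟩ = ⟨g j, hglt j hj⟩ := by
    intro j hj
    induction j with
    | zero =>
      simp only [pow_zero, Equiv.Perm.one_apply]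
      exact Fin.mk_eq_mk.mpr (by simp only [hg]; split_ifs <;> first | exact (False.elim ‹False›) | omega)
    | succ n ih =>
      have hn : n ≤ 2 * k := by omega
      have ih' : (τ ^ n) ⟨0, p0⟩ = ⟨g n, hglt n hn⟩ := ih hn
      have e1 : (τ ^ (n + 1)) ⟨0, p0⟩ = τ ((τ ^ n) ⟨0, p0⟩) := by
        rw [pow_succ', Equiv.Perm.mul_apply]
      rcases Nat.lt_or_ge n 1 with h | h
      · -- n = 0
        have hn0 : n = 0 := by omega
        subst hn0
        have h00 : (⟨g 0, hglt 0 hn⟩ : Fin m) = ⟨0, p0⟩ :=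
          Fin.mk_eq_mk.mpr (by simp only [hg]; split_ifs <;> first | exact (False.elim ‹False›) | omega)
        have hfin : (⟨m - 2, pm2⟩ : Fin m) = ⟨g (0 + 1), hglt _ hj⟩ :=
          Fin.mk_eq_mk.mpr (by simp only [hg]; split_ifs <;> first | exact (False.elim ‹False›) | omega)
        exact e1.trans ((congrArg (fun z => τ z) (ih'.trans h00)).trans
          (hτ0.trans hfin))
      · rcases Nat.lt_or_ge n (k - 1) with h2 | h2
        · -- 1 ≤ n < k - 1 : generic step, g n = m - 1 - n
          have hfin : (⟨g n - 1, by have := hglt n hn; omega⟩ : Fin m)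
              = ⟨g (n + 1), hglt _ hj⟩ :=
            Fin.mk_eq_mk.mpr (by simp only [hg]; split_ifs <;> first | exact (False.elim ‹False›) | omega)
          exact e1.trans ((congrArg (fun z => τ z) ih').trans
            ((hτgen ⟨g n, hglt n hn⟩
              (show g n ≠ 0 by simp only [hg]; split_ifs <;> first | exact (False.elim ‹False›) | omega)
              (show g n ≠ k + 1 by simp only [hg]; split_ifs <;> first | exact (False.elim ‹False›) | omega)
              (show g n ≠ m - 1 by simp only [hg]; split_ifs <;> first | exact (False.elim ‹False›) | omega)).trans
            hfin))
        · rcases Nat.eq_or_lt_of_le h2 with h3 | h3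
          · -- n = k - 1 : g n = k + 1
            have h00 : (⟨g n, hglt n hn⟩ : Fin m) = ⟨k + 1, pb⟩ :=
              Fin.mk_eq_mk.mpr (by simp only [hg]; split_ifs <;> first | exact (False.elim ‹False›) | omega)
            have hfin : (⟨m - 1, pa⟩ : Fin m) = ⟨g (n + 1), hglt _ hj⟩ :=
              Fin.mk_eq_mk.mpr (by simp only [hg]; split_ifs <;> first | exact (False.elim ‹False›) | omega)
            exact e1.trans ((congrArg (fun z => τ z) (ih'.trans h00)).trans
              (hτk1.trans hfin))
          · rcases Nat.lt_or_ge n (k + 1) with h4 | h4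
            · -- n = k : g n = m - 1
              have h00 : (⟨g n, hglt n hn⟩ : Fin m) = ⟨m - 1, pa⟩ :=
                Fin.mk_eq_mk.mpr (by simp only [hg]; split_ifs <;> first | exact (False.elim ‹False›) | omega)
              have hfin : (⟨k, pk⟩ : Fin m) = ⟨g (n + 1), hglt _ hj⟩ :=
                Fin.mk_eq_mk.mpr (by simp only [hg]; split_ifs <;> first | exact (False.elim ‹False›) | omega)
              exact e1.trans ((congrArg (fun z => τ z) (ih'.trans h00)).trans
                (hτm1.trans hfin))
            · -- k + 1 ≤ n < 2k : generic step, g n = m - n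
              have hfin : (⟨g n - 1, by have := hglt n hn; omega⟩ : Fin m)
                  = ⟨g (n + 1), hglt _ hj⟩ :=
                Fin.mk_eq_mk.mpr (by simp only [hg]; split_ifs <;> first | exact (False.elim ‹False›) | omega)
              exact e1.trans ((congrArg (fun z => τ z) ih').trans
                ((hτgen ⟨g n, hglt n hn⟩
                  (show g n ≠ 0 by simp only [hg]; split_ifs <;> first | exact (False.elim ‹False›) | omega)
                  (show g n ≠ k + 1 by simp only [hg]; split_ifs <;> first | exact (False.elim ‹False›) | omega)
                  (show g n ≠ m - 1 by simp only [hg]; split_ifs <;> first | exact (False.elim ‹False›) | omega)).trans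
                hfin))
  -- every point is reached from 0
  have hreach : ∀ y : Fin m, ∃ j, ∃ hj : j ≤ 2 * k, g j = y.val := by
    intro y
    have hy := y.isLt
    rcases Nat.eq_or_lt_of_le (Nat.zero_le y.val) with h0 | h0
    · exact ⟨0, by omega, by simp only [hg]; split_ifs <;> first | exact (False.elim ‹False›) | omega⟩
    · rcases Nat.lt_or_ge y.val (k + 1) with h1 | h1
      · exact ⟨m - y.val, by omega, by simp only [hg]; split_ifs <;> first | exact (False.elim ‹False›) | omega⟩
      · rcases Nat.lt_or_ge y.val (m - 1) with h2 | h2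
        · exact ⟨m - 1 - y.val, by omega, by simp only [hg]; split_ifs <;> first | exact (False.elim ‹False›) | omega⟩
        · exact ⟨k, by omega, by simp only [hg]; split_ifs <;> first | exact (False.elim ‹False›) | omega⟩
  have hnofix : ∀ a : Fin m, τ a ≠ a := by
    intro a
    by_cases h0 : a.val = 0
    · have ha : a = ⟨0, p0⟩ := Fin.ext h0
      rw [ha, hτ0]
      simp only [ne_eq, Fin.mk.injEq]; omega
    · by_cases h1 : a.val = k + 1
      · have ha : a = ⟨k + 1, pb⟩ := Fin.ext h1
        rw [ha, hτk1]
        simp only [ne_eq, Fin.mk.injEq]; omega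
      · by_cases h2 : a.val = m - 1
        · have ha : a = ⟨m - 1, pa⟩ := Fin.ext h2
          rw [ha, hτm1]
          simp only [ne_eq, Fin.mk.injEq]; omega
        · rw [hτgen a h0 h1 h2]
          simp only [ne_eq, Fin.ext_iff]; omega
  refine ⟨hτ0, hτk1, hτm1, hτgen, ?_, ?_⟩
  · refine ⟨⟨0, p0⟩, hnofix _, ?_⟩
    intro y _
    obtain ⟨j, hj, hgj⟩ := hreach y
    refine ⟨(j : ℤ), ?_⟩
    rw [zpow_natCast]
    exact (hkey j hj).trans (Fin.ext hgj)
  · apply Finset.eq_univ_iff_forall.mpr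
    intro a
    rw [Equiv.Perm.mem_support]
    exact hnofix a
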